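/- For every x > 0, -e^{-x} ln(1 + 1/x) < Ei(-x) < -(e^{-x}/2) ln(1 + 2/x). -/

import Mathlib

open MeasureTheory Real Set Filter

/-- The exponential integral: for `z < 0`, `Ei z = -∫_{-z}^∞ e^{-t}/t dt`. -/
noncomputable def Ei (z : ℝ) : ℝ := -∫ t in Set.Ioi (-z), Real.exp (-t) / t

namespace EiAux

noncomputable def F (x : ℝ) : ℝ := ∫ t in Set.Ioi x, Real.exp (-t) / t

lemma contOn (x : ℝ) (hx : 0 < x) :
    ContinuousOn (fun t : ℝ => Real.exp (-t) / t) (Set.Ioi x) := by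
  exact (Real.continuous_exp.comp continuous_neg).continuousOn.div
    continuousOn_id (fun t ht => ne_of_gt (lt_trans hx ht))

lemma intF (x : ℝ) (hx : 0 < x) :
    IntegrableOn (fun t : ℝ => Real.exp (-t) / t) (Set.Ioi x) := by
  have hexp : IntegrableOn (fun t : ℝ => Real.exp (-1 * t) * x⁻¹) (Set.Ioi x) :=
    (exp_neg_integrableOn_Ioi x one_pos).mul_const _
  refine hexp.integrable.mono ((contOn x hx).aestronglyMeasurable measurableSet_Ioi) ?_
  filter_upwards [MeasureTheory.self_mem_ae_restrict measurableSet_Ioi] with t ht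
  have htx : x < t := ht
  have ht0 : 0 < t := lt_trans hx htx
  rw [Real.norm_eq_abs, Real.norm_eq_abs, abs_of_pos (by positivity), abs_of_pos (by positivity)]
  rw [neg_one_mul]
  rw [div_eq_mul_inv]
  exact mul_le_mul_of_nonneg_left (by
    exact inv_anti₀ hx (le_of_lt htx)) (Real.exp_pos _).le

lemma F_nonneg (x : ℝ) (hx : 0 < x) : 0 ≤ F x := by
  apply MeasureTheory.setIntegral_nonneg measurableSet_Ioi
  intro t ht
  have : 0 < t := lt_trans hx ht
  positivity

lemma F_le (x : ℝ) (hx : 0 < x) : F x ≤ Real.exp (-x) * x⁻¹ := by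
  have h1 : F x ≤ ∫ t in Set.Ioi x, Real.exp (-t) * x⁻¹ := by
    apply MeasureTheory.setIntegral_mono_on (intF x hx)
      ((exp_neg_integrableOn_Ioi x one_pos).congr_fun (fun t _ => by rw [neg_one_mul])
        measurableSet_Ioi |>.mul_const _)
      measurableSet_Ioi
    intro t ht
    have htx : x < t := ht
    rw [div_eq_mul_inv]
    exact mul_le_mul_of_nonneg_left (inv_anti₀ hx htx.le) (Real.exp_pos _).le
  calc F x ≤ ∫ t in Set.Ioi x, Real.exp (-t) * x⁻¹ := h1
    _ = (∫ t in Set.Ioi x, Real.exp (-t)) * x⁻¹ := by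
        rw [MeasureTheory.integral_mul_const]
    _ = Real.exp (-x) * x⁻¹ := by rw [integral_exp_neg_Ioi]

lemma F_tendsto : Tendsto F atTop (nhds 0) := by
  have h0 : Tendsto (fun x : ℝ => Real.exp (-x) * x⁻¹) atTop (nhds 0) := by
    have := (Real.tendsto_exp_neg_atTop_nhds_zero).mul tendsto_inv_atTop_zero
    simpa using this
  refine tendsto_of_tendsto_of_tendsto_of_le_of_le' tendsto_const_nhds h0 ?_ ?_
  · filter_upwards [eventually_gt_atTop (0:ℝ)] with x hx using F_nonneg x hx
  · filter_upwards [eventually_gt_atTop (0:ℝ)] with x hx using F_le x hx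

lemma F_eq (b : ℝ) (hb : 0 < b) (y : ℝ) (hy : b < y) :
    F y = F b - ∫ t in b..y, Real.exp (-t) / t := by
  have hunion : Set.Ioc b y ∪ Set.Ioi y = Set.Ioi b := Set.Ioc_union_Ioi_eq_Ioi hy.le
  have hdisj : Disjoint (Set.Ioc b y) (Set.Ioi y) := Set.Ioc_disjoint_Ioi_same
  have hint1 : IntegrableOn (fun t : ℝ => Real.exp (-t) / t) (Set.Ioc b y) :=
    (intF b hb).mono_set Set.Ioc_subset_Ioi_self
  have hint2 : IntegrableOn (fun t : ℝ => Real.exp (-t) / t) (Set.Ioi y) :=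
    intF y (lt_trans hb hy)
  have := MeasureTheory.setIntegral_union hdisj measurableSet_Ioi hint1 hint2
  rw [hunion] at this
  rw [intervalIntegral.integral_of_le hy.le]
  show F y = F b - ∫ t in Set.Ioc b y, Real.exp (-t) / t
  rw [F, F, this]
  ring

lemma F_hasDeriv (x : ℝ) (hx : 0 < x) : HasDerivAt F (-(Real.exp (-x) / x)) x := by
  set b := x / 2 with hb
  have hb0 : 0 < b := by positivity
  have hbx : b < x := by simp [hb]; linarith
  have hmem : Set.Ioi b ∈ nhds x := isOpen_Ioi.mem_nhds hbx
  have hderiv : HasDerivAt (fun y => F b - ∫ t in b..y, Real.exp (-t) / t)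
      (-(Real.exp (-x) / x)) x := by
    apply HasDerivAt.const_sub
    apply intervalIntegral.integral_hasDerivAt_right
    · apply MeasureTheory.IntegrableOn.intervalIntegrable
      apply (intF (b/2) (by positivity)).mono_set
      rw [Set.uIcc_of_le hbx.le]
      intro t ht
      have h1 : b ≤ t := ht.1
      simp only [Set.mem_Ioi]
      have hb2 : b / 2 < b := by linarith
      linarith
    · exact (contOn (b/2) (by positivity)).stronglyMeasurableAtFilter isOpen_Ioi x
        (by rw [Set.mem_Ioi]; linarith)
    · exact (contOn b hb0).continuousAt (isOpen_Ioi.mem_nhds hbx)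
  apply hderiv.congr_of_eventuallyEq
  filter_upwards [hmem] with y hy
  exact F_eq b hb0 y hy

/-- Generic: if φ has negative derivative on (0,∞) and tends to 0 at ∞, then φ > 0 on (0,∞). -/
lemma pos_of_deriv_neg (φ φ' : ℝ → ℝ)
    (hd : ∀ y ∈ Set.Ioi (0:ℝ), HasDerivAt φ (φ' y) y)
    (hneg : ∀ y ∈ Set.Ioi (0:ℝ), φ' y < 0)
    (hlim : Tendsto φ atTop (nhds 0)) :
    ∀ x, 0 < x → 0 < φ x := by
  have hanti : StrictAntiOn φ (Set.Ioi 0) := by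
    apply strictAntiOn_of_deriv_neg (convex_Ioi 0)
    · exact fun y hy => (hd y hy).continuousAt.continuousWithinAt
    · intro y hy
      rw [interior_Ioi] at hy
      rw [(hd y hy).deriv]
      exact hneg y hy
  intro x hx
  have h1 : φ (x+1) < φ x := hanti (Set.mem_Ioi.2 hx) (Set.mem_Ioi.2 (by linarith)) (by linarith)
  have h2 : (0:ℝ) ≤ φ (x+1) := by
    apply le_of_tendsto hlim
    filter_upwards [eventually_ge_atTop (x+2)] with z hz
    exact (hanti (Set.mem_Ioi.2 (by linarith)) (Set.mem_Ioi.2 (by linarith)) (by linarith)).le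
  linarith

lemma log_ineq1 (y : ℝ) (hy : 0 < y) : 1 / (y + 1) < Real.log (1 + 1 / y) := by
  have h1 : (0:ℝ) < y / (y + 1) := by positivity
  have h2 : y / (y + 1) ≠ 1 :=
    ne_of_lt ((div_lt_one (by positivity : (0:ℝ) < y + 1)).2 (by linarith))
  have h3 := Real.log_lt_sub_one_of_pos h1 h2
  have h4 : Real.log (y / (y + 1)) = -Real.log (1 + 1 / y) := by
    rw [show (1 : ℝ) + 1 / y = (y + 1) / y by field_simp, ← Real.log_inv]
    congr 1
    field_simp
  rw [h4] at h3
  have h5 : y / (y + 1) - 1 = -(1 / (y + 1)) := by field_simp; ring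
  rw [h5] at h3
  linarith

lemma log_ineq2 (y : ℝ) (hy : 0 < y) :
    Real.log (1 + 2 / y) / 2 < (y + 1) / (y * (y + 2)) := by
  have hz : (0:ℝ) < 1 + 2 / y := by positivity
  have hz1 : (0:ℝ) < Real.log (1 + 2 / y) := by
    apply Real.log_pos
    have : 0 < 2 / y := by positivity
    linarith
  have h1 : Real.log (1 + 2 / y) < Real.sinh (Real.log (1 + 2 / y)) :=
    Real.self_lt_sinh_iff.2 hz1
  rw [Real.sinh_log hz] at h1
  have h2 : ((1 + 2 / y) - (1 + 2 / y)⁻¹) / 2 = 2 * ((y + 1) / (y * (y + 2))) := by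
    rw [show (1 : ℝ) + 2 / y = (y + 2) / y by field_simp]
    rw [inv_div]
    field_simp
    ring
  rw [h2] at h1
  linarith

lemma G_hasDeriv (y : ℝ) (hy : 0 < y) :
    HasDerivAt (fun y => Real.exp (-y) * Real.log (1 + 1 / y))
      (-Real.exp (-y) * Real.log (1 + 1 / y) + Real.exp (-y) * (-(y^2)⁻¹ / (1 + 1 / y))) y := by
  have h1 : HasDerivAt (fun y : ℝ => Real.exp (-y)) (-Real.exp (-y)) y := by
    have := (hasDerivAt_neg y).exp
    simpa using this
  have h2 : HasDerivAt (fun y : ℝ => 1 + 1 / y) (-(y^2)⁻¹) y := by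
    simpa [one_div] using (hasDerivAt_inv (ne_of_gt hy)).const_add 1
  have h3 : HasDerivAt (fun y : ℝ => Real.log (1 + 1 / y)) (-(y^2)⁻¹ / (1 + 1 / y)) y :=
    h2.log (by positivity)
  exact h1.mul h3

lemma H_hasDeriv (y : ℝ) (hy : 0 < y) :
    HasDerivAt (fun y => Real.exp (-y) / 2 * Real.log (1 + 2 / y))
      (-Real.exp (-y) / 2 * Real.log (1 + 2 / y)
        + Real.exp (-y) / 2 * (2 * -(y^2)⁻¹ / (1 + 2 / y))) y := by
  have h1 : HasDerivAt (fun y : ℝ => Real.exp (-y) / 2) (-Real.exp (-y) / 2) y := by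
    have := ((hasDerivAt_neg y).exp).div_const 2
    simpa using this
  have h2 : HasDerivAt (fun y : ℝ => 1 + 2 / y) (2 * -(y^2)⁻¹) y := by
    have := ((hasDerivAt_inv (ne_of_gt hy)).const_mul (2:ℝ)).const_add 1
    simpa [div_eq_mul_inv, mul_comm] using this
  have h3 : HasDerivAt (fun y : ℝ => Real.log (1 + 2 / y)) (2 * -(y^2)⁻¹ / (1 + 2 / y)) y :=
    h2.log (by positivity)
  exact h1.mul h3

lemma log_tendsto1 : Tendsto (fun y : ℝ => Real.log (1 + 1 / y)) atTop (nhds 0) := by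
  have h : Tendsto (fun y : ℝ => 1 + 1 / y) atTop (nhds 1) := by
    simpa using tendsto_const_nhds.add
      ((tendsto_inv_atTop_zero (𝕜 := ℝ)).congr (fun y => (one_div y).symm))
  have := h.log one_ne_zero
  simpa using this

lemma log_tendsto2 : Tendsto (fun y : ℝ => Real.log (1 + 2 / y)) atTop (nhds 0) := by
  have h : Tendsto (fun y : ℝ => 1 + 2 / y) atTop (nhds 1) := by
    have h2 : Tendsto (fun y : ℝ => 2 / y) atTop (nhds 0) := by
      simpa [div_eq_mul_inv] using (tendsto_inv_atTop_zero (𝕜 := ℝ)).const_mul (2:ℝ)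
    simpa using tendsto_const_nhds.add h2
  have := h.log one_ne_zero
  simpa using this

end EiAux

open EiAux in
/-- For every `x > 0`, `-e^{-x} ln(1 + 1/x) < Ei(-x) < -(e^{-x}/2) ln(1 + 2/x)`. -/
theorem Ei_neg_bounds (x : ℝ) (hx : 0 < x) :
    -Real.exp (-x) * Real.log (1 + 1 / x) < Ei (-x) ∧
      Ei (-x) < -(Real.exp (-x) / 2) * Real.log (1 + 2 / x) := by
  have hEi : Ei (-x) = -F x := by rw [Ei, neg_neg]; rfl
  -- first bound : F x < exp(-x) * log(1+1/x)
  have hD : 0 < Real.exp (-x) * Real.log (1 + 1 / x) - F x := by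
    apply pos_of_deriv_neg
      (fun y => Real.exp (-y) * Real.log (1 + 1 / y) - F y)
      (fun y => (-Real.exp (-y) * Real.log (1 + 1 / y)
        + Real.exp (-y) * (-(y^2)⁻¹ / (1 + 1 / y))) + Real.exp (-y) / y)
      ?_ ?_ ?_ x hx
    · intro y hy
      have hy0 : 0 < y := hy
      have := (G_hasDeriv y hy0).sub (F_hasDeriv y hy0)
      exact this.congr_deriv (by ring)
    · intro y hy
      have hy0 : (0:ℝ) < y := hy
      have hy1 : y ≠ 0 := hy0.ne'
      have hy2 : y + 1 ≠ 0 := by positivity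
      have hy3 : 1 + 1 / y ≠ 0 := by positivity
      have hexp : (0:ℝ) < Real.exp (-y) := Real.exp_pos _
      have h5 : -Real.exp (-y) * Real.log (1 + 1 / y)
          + Real.exp (-y) * (-(y^2)⁻¹ / (1 + 1 / y)) + Real.exp (-y) / y
          = Real.exp (-y) * (1 / (y + 1) - Real.log (1 + 1 / y)) := by
        field_simp
        ring
      rw [h5]
      exact mul_neg_of_pos_of_neg hexp (by linarith [log_ineq1 y hy0])
    · have := ((Real.tendsto_exp_neg_atTop_nhds_zero).mul log_tendsto1).sub F_tendsto
      simpa using this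
  -- second bound : exp(-x)/2 * log(1+2/x) < F x
  have hE : 0 < F x - Real.exp (-x) / 2 * Real.log (1 + 2 / x) := by
    apply pos_of_deriv_neg
      (fun y => F y - Real.exp (-y) / 2 * Real.log (1 + 2 / y))
      (fun y => -(Real.exp (-y) / y) - (-Real.exp (-y) / 2 * Real.log (1 + 2 / y)
        + Real.exp (-y) / 2 * (2 * -(y^2)⁻¹ / (1 + 2 / y))))
      ?_ ?_ ?_ x hx
    · intro y hy
      have hy0 : 0 < y := hy
      have := (F_hasDeriv y hy0).sub (H_hasDeriv y hy0)
      exact this.congr_deriv (by ring)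
    · intro y hy
      have hy0 : (0:ℝ) < y := hy
      have hy1 : y ≠ 0 := hy0.ne'
      have hy2 : y + 2 ≠ 0 := by positivity
      have hy3 : 1 + 2 / y ≠ 0 := by positivity
      have hexp : (0:ℝ) < Real.exp (-y) := Real.exp_pos _
      have h5 : -(Real.exp (-y) / y) - (-Real.exp (-y) / 2 * Real.log (1 + 2 / y)
          + Real.exp (-y) / 2 * (2 * -(y^2)⁻¹ / (1 + 2 / y)))
          = Real.exp (-y) * (Real.log (1 + 2 / y) / 2 - (y + 1) / (y * (y + 2))) := by
        field_simp
        ring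
      rw [h5]
      exact mul_neg_of_pos_of_neg hexp (by linarith [log_ineq2 y hy0])
    · have := F_tendsto.sub (((Real.tendsto_exp_neg_atTop_nhds_zero).div_const 2).mul log_tendsto2)
      simpa using this
  constructor
  · rw [hEi]; nlinarith [hD]
  · rw [hEi]; nlinarith [hE]
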